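/- If c is a cyclically reduced element of a free group of word length n ≥ 1 and g * c * g⁻¹ is also cyclically reduced, then g * c * g⁻¹ is a cyclic rotation of the word c; in particular it has the same word length n. -/

import Mathlib

/-- An element of a free group is cyclically reduced if the concatenation of its
reduced word with itself is still reduced. -/
def FreeGroup.IsCyclicallyReducedElt {α : Type*} [DecidableEq α] (w : FreeGroup α) : Prop :=
  FreeGroup.reduce (w.toWord ++ w.toWord) = w.toWord ++ w.toWord

namespace ConjAux
open FreeGroup List

variable {α : Type*} [DecidableEq α]

def Ok (a b : α × Bool) : Prop := ¬(a.1 = b.1 ∧ a.2 = !b.2)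

lemma reduce_eq_self_of_chain : ∀ {L : List (α × Bool)}, List.IsChain Ok L → FreeGroup.reduce L = L
  | [], _ => rfl
  | a :: L, h => by
    rw [FreeGroup.reduce.cons, reduce_eq_self_of_chain (L := L) h.tail]
    cases L with
    | nil => rfl
    | cons b t =>
      have : Ok a b := (List.isChain_cons_cons.mp h).1
      simp only [Ok] at this
      simp [this]

lemma chain_of_reduce_eq_self {L : List (α × Bool)} (h : FreeGroup.reduce L = L) :
    List.IsChain Ok L := by
  rw [List.isChain_iff_getElem]
  intro i hi
  by_contra hR
  rw [Ok, not_not] at hR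
  have hi1 : i < L.length := by omega
  have hi2 : i + 1 < L.length := by omega
  have hb : L.get ⟨i+1, hi2⟩ = ((L.get ⟨i, hi1⟩).1, !(L.get ⟨i, hi1⟩).2) := by
    ext
    · exact hR.1.symm
    · have := hR.2
      simp only [List.get_eq_getElem] at this ⊢
      rw [this, Bool.not_not]
  have hdec : L = L.take i ++ (L.get ⟨i, hi1⟩) :: (L.get ⟨i+1, hi2⟩) :: L.drop (i+2) := by
    conv_lhs => rw [← List.take_append_drop i L]
    congr 1
    rw [List.drop_eq_getElem_cons hi1, List.drop_eq_getElem_cons hi2]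
    simp
  rw [hdec] at h
  rw [hb] at h
  exact FreeGroup.reduce.not h

lemma chain_toWord (g : FreeGroup α) : List.IsChain Ok g.toWord :=
  chain_of_reduce_eq_self (FreeGroup.reduce_toWord g)

lemma key (n : ℕ) (hn : 1 ≤ n) :
    ∀ m (g c : FreeGroup α), g.toWord.length = m → c.toWord.length = n →
      FreeGroup.IsCyclicallyReducedElt c → FreeGroup.IsCyclicallyReducedElt (g * c * g⁻¹) →
      ∃ k, k < n ∧ (g * c * g⁻¹).toWord = c.toWord.rotate k := by
  intro m
  induction m with
  | zero =>
    intro g c hg hlen hc hconj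
    have hg1 : g = 1 := FreeGroup.toWord_eq_nil_iff.mp (List.length_eq_zero_iff.mp hg)
    subst hg1
    exact ⟨0, hn, by simp⟩
  | succ m ih =>
    intro g c hg hlen hc hconj
    -- decompose g's word at the end
    rcases List.eq_nil_or_concat g.toWord with hnil | ⟨u', x, hu⟩
    · rw [hnil] at hg; simp at hg
    rw [List.concat_eq_append] at hu
    have hwne : c.toWord ≠ [] := by
      intro h; rw [h] at hlen; simp at hlen; omega
    obtain ⟨wh, wt, hw⟩ := List.exists_cons_of_ne_nil hwne
    rcases List.eq_nil_or_concat c.toWord with hnil | ⟨w'', wl, hw2⟩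
    · exact absurd hnil hwne
    rw [List.concat_eq_append] at hw2
    have chu := chain_toWord g
    have chw := chain_toWord c
    have chww : List.IsChain Ok (c.toWord ++ c.toWord) := chain_of_reduce_eq_self hc
    have hξinv : (FreeGroup.mk [x])⁻¹ = FreeGroup.mk [(x.1, !x.2)] := by
      rw [FreeGroup.inv_mk]; simp [FreeGroup.invRev]
    have hgm : g = FreeGroup.mk u' * FreeGroup.mk [x] := by
      rw [FreeGroup.mul_mk, ← hu, FreeGroup.mk_toWord]
    have hu'red : (FreeGroup.mk u').toWord = u' := by
      rw [FreeGroup.toWord_mk]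
      exact reduce_eq_self_of_chain (chu.prefix ⟨[x], hu.symm⟩)
    have hlu' : u'.length = m := by
      have := hg; rw [hu] at this; simp at this; omega
    have hgsplit : g * c * g⁻¹ =
        FreeGroup.mk u' * (FreeGroup.mk [x] * c * (FreeGroup.mk [x])⁻¹) * (FreeGroup.mk u')⁻¹ := by
      rw [hgm]; group
    -- chain of triple word
    have chwww : List.IsChain Ok (c.toWord ++ c.toWord ++ c.toWord) := by
      rcases List.isChain_append.mp chww with ⟨_, _, hj⟩
      refine List.isChain_append.mpr ⟨chww, chw, ?_⟩
      intro a ha b hb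
      rw [List.getLast?_append_of_ne_nil _ hwne] at ha
      exact hj a ha b hb
    by_cases h1 : wh = (x.1, !x.2)
    · -- left cancellation : conjugating by x rotates by 1
      have hcw : c = FreeGroup.mk ((x.1, !x.2) :: wt) := by
        rw [← FreeGroup.mk_toWord (x := c), hw, h1]
      have hstep : FreeGroup.mk [x] * c * (FreeGroup.mk [x])⁻¹
          = FreeGroup.mk (wt ++ [(x.1, !x.2)]) := by
        rw [hcw, hξinv, show ((x.1, !x.2) :: wt) = [(x.1, !x.2)] ++ wt from rfl,
          ← FreeGroup.mul_mk, ← FreeGroup.mul_mk, ← hξinv]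
        group
      have hrotw : wt ++ [wh] = c.toWord.rotate 1 := by
        rw [hw, List.rotate_cons_succ, List.rotate_zero]
      have hinfix : (wt ++ [wh]) <:+: (c.toWord ++ c.toWord) := by
        refine ⟨[wh], wt, ?_⟩
        rw [hw]; simp
      have hred1 : FreeGroup.reduce (wt ++ [wh]) = wt ++ [wh] :=
        reduce_eq_self_of_chain (chww.infix hinfix)
      have htc1 : (FreeGroup.mk [x] * c * (FreeGroup.mk [x])⁻¹).toWord = wt ++ [wh] := by
        rw [hstep, ← h1, FreeGroup.toWord_mk, hred1]
      have hlen1 : (FreeGroup.mk [x] * c * (FreeGroup.mk [x])⁻¹).toWord.length = n := by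
        rw [htc1]
        have := hlen; rw [hw] at this; simp at this ⊢; omega
      have hcyc1 : FreeGroup.IsCyclicallyReducedElt (FreeGroup.mk [x] * c * (FreeGroup.mk [x])⁻¹) := by
        rw [FreeGroup.IsCyclicallyReducedElt, htc1]
        refine reduce_eq_self_of_chain (chwww.infix ⟨[wh], wt, ?_⟩)
        rw [hw]; simp
      have hconj1 : FreeGroup.IsCyclicallyReducedElt
          (FreeGroup.mk u' * (FreeGroup.mk [x] * c * (FreeGroup.mk [x])⁻¹) * (FreeGroup.mk u')⁻¹) := by
        rw [← hgsplit]; exact hconj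
      obtain ⟨k, hk, hr⟩ := ih (FreeGroup.mk u') (FreeGroup.mk [x] * c * (FreeGroup.mk [x])⁻¹)
        (by rw [hu'red]; exact hlu') hlen1 hcyc1 hconj1
      refine ⟨(1 + k) % n, Nat.mod_lt _ (by omega), ?_⟩
      rw [hgsplit, hr, htc1, hrotw, List.rotate_rotate, ← hlen, List.rotate_mod]
    · by_cases h2 : wl = x
      · -- right cancellation : conjugating by x rotates by n-1
        have hcw : c = FreeGroup.mk (w'' ++ [x]) := by
          rw [← FreeGroup.mk_toWord (x := c), hw2, h2]
        have hstep : FreeGroup.mk [x] * c * (FreeGroup.mk [x])⁻¹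
            = FreeGroup.mk (x :: w'') := by
          rw [hcw, hξinv, show FreeGroup.mk [x] * FreeGroup.mk (w'' ++ [x]) * FreeGroup.mk [(x.1, !x.2)]
            = FreeGroup.mk ((x :: w'') ++ [x]) * FreeGroup.mk [(x.1, !x.2)] by
              rw [FreeGroup.mul_mk]; rfl,
            FreeGroup.mul_mk, show ((x :: w'') ++ [x]) ++ [(x.1, !x.2)]
              = (x :: w'') ++ ([x] ++ [(x.1, !x.2)]) by simp,
            ← FreeGroup.mul_mk, ← FreeGroup.mul_mk, ← hξinv]
          group
        have hlw'' : w''.length = n - 1 := by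
          have := hlen; rw [hw2] at this; simp at this; omega
        have hrotw : (x :: w'') = c.toWord.rotate (n - 1) := by
          rw [List.rotate_eq_drop_append_take (by rw [hlen]; omega), hw2,
            show n - 1 = w''.length from hlw''.symm, List.drop_left, List.take_left]
          rw [← h2]; rfl
        have hinfix : (x :: w'') <:+: (c.toWord ++ c.toWord) := by
          refine ⟨w'', [x], ?_⟩
          rw [hw2, h2]; simp
        have hred1 : FreeGroup.reduce (x :: w'') = x :: w'' :=
          reduce_eq_self_of_chain (chww.infix hinfix)
        have htc1 : (FreeGroup.mk [x] * c * (FreeGroup.mk [x])⁻¹).toWord = x :: w'' := by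
          rw [hstep, FreeGroup.toWord_mk, hred1]
        have hlen1 : (FreeGroup.mk [x] * c * (FreeGroup.mk [x])⁻¹).toWord.length = n := by
          rw [htc1]; simp [hlw'']; omega
        have hcyc1 : FreeGroup.IsCyclicallyReducedElt (FreeGroup.mk [x] * c * (FreeGroup.mk [x])⁻¹) := by
          rw [FreeGroup.IsCyclicallyReducedElt, htc1]
          refine reduce_eq_self_of_chain (chwww.infix ⟨w'', [x], ?_⟩)
          rw [hw2, h2]; simp
        have hconj1 : FreeGroup.IsCyclicallyReducedElt
            (FreeGroup.mk u' * (FreeGroup.mk [x] * c * (FreeGroup.mk [x])⁻¹) * (FreeGroup.mk u')⁻¹) := by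
          rw [← hgsplit]; exact hconj
        obtain ⟨k, hk, hr⟩ := ih (FreeGroup.mk u') (FreeGroup.mk [x] * c * (FreeGroup.mk [x])⁻¹)
          (by rw [hu'red]; exact hlu') hlen1 hcyc1 hconj1
        refine ⟨((n - 1) + k) % n, Nat.mod_lt _ (by omega), ?_⟩
        rw [hgsplit, hr, htc1, hrotw, List.rotate_rotate, ← hlen, List.rotate_mod]
      · -- no cancellation: contradiction with hconj
        exfalso
        have hmkW : g * c * g⁻¹ =
            FreeGroup.mk (g.toWord ++ c.toWord ++ FreeGroup.invRev g.toWord) := by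
          conv_lhs => rw [← FreeGroup.mk_toWord (x := g), ← FreeGroup.mk_toWord (x := c)]
          rw [FreeGroup.inv_mk, FreeGroup.mul_mk, FreeGroup.mul_mk]
        have chinv : List.IsChain Ok (FreeGroup.invRev g.toWord) := by
          have := chain_toWord g⁻¹
          rwa [FreeGroup.toWord_inv] at this
        have hheadinv : (FreeGroup.invRev g.toWord).head? = some (x.1, !x.2) := by
          rw [hu]; simp [FreeGroup.invRev]
        have hlastu : g.toWord.getLast? = some x := by rw [hu]; exact List.getLast?_concat
        have chW : List.IsChain Ok (g.toWord ++ c.toWord ++ FreeGroup.invRev g.toWord) := by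
          refine List.isChain_append.mpr ⟨List.isChain_append.mpr ⟨chu, chw, ?_⟩, chinv, ?_⟩
          · intro a ha b hb
            rw [hlastu, Option.mem_some_iff] at ha
            rw [hw, List.head?_cons, Option.mem_some_iff] at hb
            subst ha; subst hb
            rintro ⟨e1, e2⟩
            exact h1 (Prod.ext e1.symm (by rw [e2, Bool.not_not]))
          · intro a ha b hb
            rw [List.getLast?_append_of_ne_nil _ hwne, hw2, List.getLast?_concat,
              Option.mem_some_iff] at ha
            rw [hheadinv, Option.mem_some_iff] at hb
            subst ha; subst hb
            rintro ⟨e1, e2⟩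
            simp only [Bool.not_not] at e2
            exact h2 (Prod.ext e1 e2)
        have htcW : (g * c * g⁻¹).toWord
            = g.toWord ++ c.toWord ++ FreeGroup.invRev g.toWord := by
          rw [hmkW, FreeGroup.toWord_mk, reduce_eq_self_of_chain chW]
        -- now find the cancelling pair at the wrap-around
        have hune : g.toWord ≠ [] := by rw [hu]; simp
        obtain ⟨h0, t0, hu0⟩ := List.exists_cons_of_ne_nil hune
        have hinv0 : FreeGroup.invRev g.toWord = FreeGroup.invRev t0 ++ [(h0.1, !h0.2)] := by
          rw [hu0]; simp [FreeGroup.invRev]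
        rw [FreeGroup.IsCyclicallyReducedElt, htcW] at hconj
        refine FreeGroup.reduce.not (p := False)
          (L₁ := g.toWord ++ c.toWord ++ FreeGroup.invRev g.toWord ++ (g.toWord ++ c.toWord ++ FreeGroup.invRev g.toWord))
          (L₂ := g.toWord ++ c.toWord ++ FreeGroup.invRev t0)
          (L₃ := t0 ++ c.toWord ++ FreeGroup.invRev g.toWord) (x := h0.1) (b := !h0.2) ?_
        rw [hconj, hu0]
        simp [FreeGroup.invRev, Bool.not_not]

end ConjAux

theorem freeGroup_conj_cyclicallyReduced_is_rotation {α : Type*} [DecidableEq α]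
    (c g : FreeGroup α) (n : ℕ) (hn : 1 ≤ n) (hlen : c.toWord.length = n)
    (hc : FreeGroup.IsCyclicallyReducedElt c)
    (hconj : FreeGroup.IsCyclicallyReducedElt (g * c * g⁻¹)) :
    (∃ k, k < n ∧ (g * c * g⁻¹).toWord = c.toWord.rotate k) ∧
      (g * c * g⁻¹).toWord.length = n := by
  obtain ⟨k, hk, hr⟩ := ConjAux.key n hn g.toWord.length g c rfl hlen hc hconj
  exact ⟨⟨k, hk, hr⟩, by rw [hr, List.length_rotate, hlen]⟩
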